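/- Let 𝔱 be a finite-dimensional real vector space, h a positive definite symmetric bilinear form on 𝔱, H_V a symmetric bilinear form, and β_1,...,β_m nonzero linear functionals on 𝔱 whose zero sets bound an open chamber C. Then for sufficiently small real s, the function ζ ↦ (1/2)[h(ζ,ζ) + s·H_V(ζ,ζ)] - Σ_j log|β_j(ζ)| attains a minimum at some interior point of C, and at any critical point the Hessian h + s·H_V + Σ_j β_j ⊗ β_j / β_j(ζ)^2 is positive definite. -/

import Mathlib

/- STATEMENT 7: Let 𝔱 be a finite-dimensional real vector space (modelled as
EuclideanSpace ℝ (Fin l)), h a positive definite symmetric bilinear form, H_V a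
symmetric bilinear form, and β_1,…,β_m nonzero linear functionals whose zero
sets bound the open chamber C = {ζ | β_j(ζ) > 0 ∀j}.  Then for sufficiently
small real s, the function
  ζ ↦ (1/2)[h(ζ,ζ) + s·H_V(ζ,ζ)] - Σ_j log|β_j(ζ)|
attains a minimum at an interior point of C, and at any critical point ζ ∈ C
the Hessian h + s·H_V + Σ_j β_j ⊗ β_j / β_j(ζ)² is positive definite. -/

theorem stmt7 (l m : ℕ)
    (h HV : EuclideanSpace ℝ (Fin l) →ₗ[ℝ] EuclideanSpace ℝ (Fin l) →ₗ[ℝ] ℝ)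
    (hsymm : ∀ x y, h x y = h y x) (hpos : ∀ x, x ≠ 0 → 0 < h x x)
    (HVsymm : ∀ x y, HV x y = HV y x)
    (β : Fin m → (EuclideanSpace ℝ (Fin l) →ₗ[ℝ] ℝ)) (hβ : ∀ j, β j ≠ 0)
    (C : Set (EuclideanSpace ℝ (Fin l))) (hC : C = {ζ | ∀ j, 0 < β j ζ})
    (hCne : C.Nonempty) :
    ∃ ε > 0, ∀ s : ℝ, |s| < ε →
      (∃ ζ ∈ C, IsMinOn
          (fun ζ => (1 / 2) * (h ζ ζ + s * HV ζ ζ) - ∑ j, Real.log |β j ζ|) C ζ) ∧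
      ∀ ζ ∈ C,
        fderiv ℝ (fun ζ => (1 / 2) * (h ζ ζ + s * HV ζ ζ) - ∑ j, Real.log |β j ζ|) ζ = 0 →
        ∀ ξ, ξ ≠ 0 → 0 < h ξ ξ + s * HV ξ ξ + ∑ j, (β j ξ) ^ 2 / (β j ζ) ^ 2 := by
  obtain ⟨ζ₀, hζ₀C⟩ := hCne
  subst hC
  rcases subsingleton_or_nontrivial (EuclideanSpace ℝ (Fin l)) with hsub | hnt
  · refine ⟨1, one_pos, fun s _ => ?_⟩
    refine ⟨⟨ζ₀, hζ₀C, isMinOn_iff.mpr fun x _ => ?_⟩, fun ζ _ _ ξ hξ => ?_⟩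
    · rw [Subsingleton.elim x ζ₀]
    · exact absurd (Subsingleton.elim ξ 0) hξ
  -- continuity facts
  have hcont : Continuous fun x : EuclideanSpace ℝ (Fin l) => h x x := by
    have h1 := (LinearMap.toContinuousLinearMap.toLinearMap.comp h).continuous_of_finiteDimensional
    have h2 := h1.clm_apply continuous_id
    simpa using h2
  have HVcont : Continuous fun x : EuclideanSpace ℝ (Fin l) => HV x x := by
    have h1 := (LinearMap.toContinuousLinearMap.toLinearMap.comp HV).continuous_of_finiteDimensional
    have h2 := h1.clm_apply continuous_id
    simpa using h2
  have βcont : ∀ j, Continuous fun x => β j x := fun j => (β j).continuous_of_finiteDimensional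
  -- min of h on sphere, max of |HV| on sphere
  have hsne : (Metric.sphere (0 : EuclideanSpace ℝ (Fin l)) 1).Nonempty :=
    NormedSpace.sphere_nonempty.mpr zero_le_one
  obtain ⟨u₀, hu₀S, hu₀min⟩ := (isCompact_sphere _ _).exists_isMinOn hsne hcont.continuousOn
  obtain ⟨v₀, hv₀S, hv₀max⟩ := (isCompact_sphere _ _).exists_isMaxOn hsne HVcont.abs.continuousOn
  set c : ℝ := h u₀ u₀ with hcdef
  set K : ℝ := |HV v₀ v₀| with hKdef
  have hcpos : 0 < c := by
    apply hpos
    intro h0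
    rw [h0] at hu₀S
    simp at hu₀S
  have hK0 : 0 ≤ K := abs_nonneg _
  -- scaling
  have scale : ∀ x : EuclideanSpace ℝ (Fin l), x ≠ 0 →
      c * ‖x‖ ^ 2 ≤ h x x ∧ |HV x x| ≤ K * ‖x‖ ^ 2 := by
    intro x hx
    have hr : 0 < ‖x‖ := norm_pos_iff.mpr hx
    set u : EuclideanSpace ℝ (Fin l) := ‖x‖⁻¹ • x with hu
    have hu1 : ‖u‖ = 1 := by
      rw [hu, norm_smul, norm_inv, norm_norm]
      field_simp
    have hxu : x = ‖x‖ • u := by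
      rw [hu, smul_smul]
      field_simp
      simp
    have e1 : h x x = ‖x‖ ^ 2 * h u u := by
      conv_lhs => rw [hxu]
      simp only [map_smul, LinearMap.smul_apply, smul_eq_mul]
      ring
    have e2 : HV x x = ‖x‖ ^ 2 * HV u u := by
      conv_lhs => rw [hxu]
      simp only [map_smul, LinearMap.smul_apply, smul_eq_mul]
      ring
    have huS : u ∈ Metric.sphere (0 : EuclideanSpace ℝ (Fin l)) 1 :=
      mem_sphere_zero_iff_norm.mpr hu1
    have hmin := isMinOn_iff.mp hu₀min u huS
    have hmax := isMaxOn_iff.mp hv₀max u huS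
    constructor
    · rw [e1]
      have := sq_nonneg ‖x‖
      nlinarith
    · rw [e2, abs_mul, abs_of_nonneg (sq_nonneg ‖x‖)]
      nlinarith [abs_nonneg (HV u u), sq_nonneg ‖x‖]
  set c' : ℝ := c / (K + 1) with hc'def
  have hc'pos : 0 < c' := div_pos hcpos (by linarith)
  have hcc' : c = c' * (K + 1) := by
    rw [hc'def]
    field_simp
  clear_value c K c'
  refine ⟨c', hc'pos, fun s hs => ?_⟩
  -- key quadratic lower bound
  have quad : ∀ x : EuclideanSpace ℝ (Fin l), c' * ‖x‖ ^ 2 ≤ h x x + s * HV x x := by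
    intro x
    rcases eq_or_ne x 0 with rfl | hx
    · simp
    · obtain ⟨e1, e2⟩ := scale x hx
      have h1 : -(|s| * |HV x x|) ≤ s * HV x x := by
        have := neg_abs_le (s * HV x x)
        rw [abs_mul] at this
        linarith
      have h2 : |s| * |HV x x| ≤ |s| * (K * ‖x‖ ^ 2) :=
        mul_le_mul_of_nonneg_left e2 (abs_nonneg s)
      have h3 : |s| * K ≤ c' * K := mul_le_mul_of_nonneg_right hs.le hK0
      nlinarith [sq_nonneg ‖x‖, abs_nonneg s]
  -- positive definiteness of the Hessian (does not need the critical point hypothesis)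
  have hess : ∀ ζ : EuclideanSpace ℝ (Fin l), ∀ ξ : EuclideanSpace ℝ (Fin l), ξ ≠ 0 →
      0 < h ξ ξ + s * HV ξ ξ + ∑ j, (β j ξ) ^ 2 / (β j ζ) ^ 2 := by
    intro ζ ξ hξ
    have h1 : 0 < c' * ‖ξ‖ ^ 2 :=
      mul_pos hc'pos (pow_pos (norm_pos_iff.mpr hξ) 2)
    have h2 : (0:ℝ) ≤ ∑ j, (β j ξ) ^ 2 / (β j ζ) ^ 2 :=
      Finset.sum_nonneg fun j _ => div_nonneg (sq_nonneg _) (sq_nonneg _)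
    linarith [quad ξ]
  set f : EuclideanSpace ℝ (Fin l) → ℝ :=
    fun ζ => (1 / 2) * (h ζ ζ + s * HV ζ ζ) - ∑ j, Real.log |β j ζ| with hfdef
  clear_value f
  refine ⟨?_, fun ζ _ _ ξ hξ => hess ζ ξ hξ⟩
  -- operator norm bounds
  set N : ℝ := ∑ j, ‖LinearMap.toContinuousLinearMap (β j)‖ with hNdef
  have hN0 : 0 ≤ N := Finset.sum_nonneg fun j _ => norm_nonneg _
  have hNmul : ∀ r : ℝ, ∑ i, ‖LinearMap.toContinuousLinearMap (β i)‖ * r = N * r := by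
    intro r
    rw [hNdef, Finset.sum_mul]
  clear_value N
  have βbound : ∀ j (x : EuclideanSpace ℝ (Fin l)),
      |β j x| ≤ ‖LinearMap.toContinuousLinearMap (β j)‖ * ‖x‖ := by
    intro j x
    have := (LinearMap.toContinuousLinearMap (β j)).le_opNorm x
    simpa [Real.norm_eq_abs] using this
  have logbound : ∀ j (x : EuclideanSpace ℝ (Fin l)), 0 < β j x →
      Real.log |β j x| ≤ ‖LinearMap.toContinuousLinearMap (β j)‖ * ‖x‖ := by
    intro j x hx
    rw [abs_of_pos hx]
    have h1 := Real.log_le_sub_one_of_pos hx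
    have h2 := βbound j x
    rw [abs_of_pos hx] at h2
    linarith
  have sumlog : ∀ x ∈ {ζ | ∀ j, 0 < β j ζ}, ∑ j, Real.log |β j x| ≤ N * ‖x‖ := by
    intro x hx
    calc ∑ j, Real.log |β j x| ≤ ∑ j, ‖LinearMap.toContinuousLinearMap (β j)‖ * ‖x‖ :=
          Finset.sum_le_sum fun j _ => logbound j x (hx j)
      _ = N * ‖x‖ := hNmul ‖x‖
  -- lower bound A
  have boundA : ∀ x ∈ {ζ | ∀ j, 0 < β j ζ}, c' / 2 * ‖x‖ ^ 2 - N * ‖x‖ ≤ f x := by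
    intro x hx
    have := quad x
    have := sumlog x hx
    simp only [hfdef]
    linarith
  -- lower bound B
  have boundB : ∀ (j : Fin m), ∀ x ∈ {ζ | ∀ j, 0 < β j ζ},
      -Real.log (β j x) - N * ‖x‖ ≤ f x := by
    intro j x hx
    have hq : (0:ℝ) ≤ h x x + s * HV x x := le_trans (by positivity) (quad x)
    have hsplit : Real.log |β j x| + ∑ i ∈ Finset.univ.erase j, Real.log |β i x|
        = ∑ i, Real.log |β i x| :=
      Finset.add_sum_erase _ (fun i => Real.log |β i x|) (Finset.mem_univ j)
    have herase : ∑ i ∈ Finset.univ.erase j, Real.log |β i x|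
        ≤ ∑ i ∈ Finset.univ.erase j, ‖LinearMap.toContinuousLinearMap (β i)‖ * ‖x‖ :=
      Finset.sum_le_sum fun i _ => logbound i x (hx i)
    have hsub : ∑ i ∈ Finset.univ.erase j, ‖LinearMap.toContinuousLinearMap (β i)‖ * ‖x‖
        ≤ ∑ i, ‖LinearMap.toContinuousLinearMap (β i)‖ * ‖x‖ :=
      Finset.sum_le_sum_of_subset_of_nonneg (Finset.erase_subset _ _)
        (fun i _ _ => mul_nonneg (norm_nonneg _) (norm_nonneg _))
    have hNx : ∑ i, ‖LinearMap.toContinuousLinearMap (β i)‖ * ‖x‖ = N * ‖x‖ := hNmul ‖x‖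
    have habs : Real.log |β j x| = Real.log (β j x) := by rw [abs_of_pos (hx j)]
    simp only [hfdef]
    rw [← hsplit, habs]
    linarith
  set f₀ : ℝ := f ζ₀ with hf₀def
  set R : ℝ := 2 * (N + |f₀| + 1) / c' + 1 with hRdef
  have hR1 : 1 ≤ R := by
    rw [hRdef]
    have : 0 ≤ 2 * (N + |f₀| + 1) / c' := by positivity
    linarith
  have hRkey : 2 * (N + |f₀| + 1) ≤ c' * R := by
    have hid : c' * R = 2 * (N + |f₀| + 1) + c' := by
      rw [hRdef]
      field_simp
    linarith
  set δ : ℝ := Real.exp (-(f₀ + N * R + 1)) with hδdef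
  have hδpos : 0 < δ := Real.exp_pos _
  have hlogδ : Real.log δ = -(f₀ + N * R + 1) := Real.log_exp _
  clear_value f₀ R δ
  -- far points
  have far : ∀ x ∈ {ζ | ∀ j, 0 < (β j) ζ}, R < ‖x‖ → f₀ < f x := by
    intro x hx hr
    have h1 : c' * R ≤ c' * ‖x‖ := mul_le_mul_of_nonneg_left hr.le hc'pos.le
    have h2 : 1 ≤ ‖x‖ := le_trans hR1 hr.le
    have h3 := le_abs_self f₀
    have h4 : 2 * (N + |f₀| + 1) * ‖x‖ ≤ c' * ‖x‖ ^ 2 := by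
      calc 2 * (N + |f₀| + 1) * ‖x‖ ≤ (c' * ‖x‖) * ‖x‖ :=
            mul_le_mul_of_nonneg_right (le_trans hRkey h1) (by linarith)
        _ = c' * ‖x‖ ^ 2 := by ring
    have h5 : (|f₀| + 1) * 1 ≤ (|f₀| + 1) * ‖x‖ :=
      mul_le_mul_of_nonneg_left h2 (by positivity)
    have h6 := boundA x hx
    linarith [h3, h4, h5, h6]
  -- near-boundary points
  have near : ∀ x ∈ {ζ | ∀ j, 0 < (β j) ζ}, ‖x‖ ≤ R → ∀ j, β j x < δ → f₀ < f x := by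
    intro x hx hxR j hjδ
    have h1 := boundB j x hx
    have h2 : Real.log (β j x) < Real.log δ := Real.log_lt_log (hx j) hjδ
    have h3 : N * ‖x‖ ≤ N * R := mul_le_mul_of_nonneg_left hxR hN0
    rw [hlogδ] at h2
    linarith
  -- compact set
  set K' : Set (EuclideanSpace ℝ (Fin l)) :=
    Metric.closedBall 0 R ∩ ⋂ j, {x | δ ≤ β j x} with hK'def
  have hK'sub : K' ⊆ {ζ | ∀ j, 0 < β j ζ} := by
    intro x hxK j
    have := (Set.mem_iInter.mp hxK.2) j
    exact lt_of_lt_of_le hδpos this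
  have hK'cpt : IsCompact K' :=
    (isCompact_closedBall _ _).inter_right
      (isClosed_iInter fun j => isClosed_le continuous_const (βcont j))
  have notmem : ∀ x : EuclideanSpace ℝ (Fin l), x ∉ K' → R < ‖x‖ ∨ ∃ j, β j x < δ := by
    intro x hxK
    by_contra hcon
    push_neg at hcon
    exact hxK ⟨mem_closedBall_zero_iff.mpr hcon.1, Set.mem_iInter.mpr hcon.2⟩
  have hζ₀K : ζ₀ ∈ K' := by
    by_contra hcon
    rcases notmem ζ₀ hcon with hfar | ⟨j, hnear⟩
    · have := far ζ₀ hζ₀C hfar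
      rw [← hf₀def] at this
      exact lt_irrefl _ this
    · rcases le_or_gt ‖ζ₀‖ R with hle | hgt
      · have := near ζ₀ hζ₀C hle j hnear
        rw [← hf₀def] at this
        exact lt_irrefl _ this
      · have := far ζ₀ hζ₀C hgt
        rw [← hf₀def] at this
        exact lt_irrefl _ this
  -- continuity of f on C
  have fcont : ContinuousOn f {ζ | ∀ j, 0 < β j ζ} := by
    rw [hfdef]
    apply ContinuousOn.sub
    · exact (continuous_const.mul (hcont.add (continuous_const.mul HVcont))).continuousOn
    · apply continuousOn_finset_sum
      intro j _
      intro x hx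
      have h1 : ContinuousAt (fun x => Real.log |β j x|) x :=
        (((βcont j).abs).continuousAt).log (abs_ne_zero.mpr (ne_of_gt (hx j)))
      exact h1.continuousWithinAt
  obtain ⟨ζm, hζmK, hζmmin⟩ := hK'cpt.exists_isMinOn ⟨ζ₀, hζ₀K⟩ (fcont.mono hK'sub)
  refine ⟨ζm, hK'sub hζmK, isMinOn_iff.mpr fun x hx => ?_⟩
  by_cases hxK : x ∈ K'
  · exact isMinOn_iff.mp hζmmin x hxK
  · have hf0 : f ζm ≤ f₀ := by
      rw [hf₀def]
      exact isMinOn_iff.mp hζmmin ζ₀ hζ₀K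
    rcases notmem x hxK with hfar | ⟨j, hnear⟩
    · exact le_of_lt (lt_of_le_of_lt hf0 (far x hx hfar))
    · rcases le_or_gt ‖x‖ R with hle | hgt
      · exact le_of_lt (lt_of_le_of_lt hf0 (near x hx hle j hnear))
      · exact le_of_lt (lt_of_le_of_lt hf0 (far x hx hgt))
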